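/- The family {φ^{ij} : 1 ≤ i ≤ j ≤ N} is orthonormal with respect to the inner product (·,·)_H, and its linear span equals the H-orthogonal complement {z : Fin N → Ṽ | (z, η)_H = 0 for all η ∈ T_φ} of the tangent space; in particular it is an orthonormal basis of this complement. -/

import Mathlib

open scoped RealInnerProductSpace

/-- The outer product `⟦v,w⟧ ∈ ℝ^{N×N}` of two tuples, with entries `⟨v i, w j⟩`. -/
noncomputable def outerProd {N : ℕ} {H₀ : Type*} [NormedAddCommGroup H₀]
    [InnerProductSpace ℝ H₀] (v w : Fin N → H₀) : Matrix (Fin N) (Fin N) ℝ :=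
  Matrix.of fun i j => ⟪v i, w j⟫

/-- Multiplication of a tuple by a matrix from the right: `(vS)_j = Σ_i S_{ij} v_i`. -/
def smulMat {N : ℕ} {H₀ : Type*} [AddCommGroup H₀] [Module ℝ H₀]
    (v : Fin N → H₀) (S : Matrix (Fin N) (Fin N) ℝ) : Fin N → H₀ :=
  fun j => ∑ i, S i j • v i

/-- The inner product `(v,w)_H = Σ_j ⟨v_j, w_j⟩ = tr⟦v,w⟧`. -/
noncomputable def innerH {N : ℕ} {H₀ : Type*} [NormedAddCommGroup H₀]
    [InnerProductSpace ℝ H₀] (v w : Fin N → H₀) : ℝ :=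
  ∑ j, ⟪v j, w j⟫

/-- The normalized symmetric matrices `S^{ij}`: `S^{ii} = e_i e_iᵀ` and, for `i ≠ j`,
`S^{ij} = (e_i e_jᵀ + e_j e_iᵀ)/√2`. -/
noncomputable def SijMat {N : ℕ} (i j : Fin N) : Matrix (Fin N) (Fin N) ℝ :=
  if i = j then Matrix.single i i 1
  else (Real.sqrt 2)⁻¹ • (Matrix.single i j 1 + Matrix.single j i 1)

section Aux

variable {N : ℕ} {H₀ : Type*} [NormedAddCommGroup H₀] [InnerProductSpace ℝ H₀]

lemma aux_inner_phi {φ : Fin N → H₀} (hφ : outerProd φ φ = 1) (i k : Fin N) :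
    ⟪φ i, φ k⟫ = if i = k then (1:ℝ) else 0 := by
  have := congrFun (congrFun hφ i) k
  simpa [outerProd, Matrix.one_apply] using this

lemma aux_innerH_smulMat_smulMat {φ : Fin N → H₀} (hφ : outerProd φ φ = 1)
    (A B : Matrix (Fin N) (Fin N) ℝ) :
    innerH (smulMat φ A) (smulMat φ B) = ∑ i, ∑ j, A i j * B i j := by
  unfold innerH smulMat
  simp only [sum_inner, inner_sum, real_inner_smul_left, real_inner_smul_right,
    aux_inner_phi hφ, mul_ite, mul_one, mul_zero, Finset.sum_ite_eq, Finset.sum_ite_eq',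
    Finset.mem_univ, if_true]
  rw [Finset.sum_comm]
  exact Finset.sum_congr rfl fun _ _ => Finset.sum_congr rfl fun _ _ => mul_comm _ _

lemma aux_frob_std (i j : Fin N) (M : Matrix (Fin N) (Fin N) ℝ) :
    ∑ a, ∑ b, Matrix.single i j (1:ℝ) a b * M a b = M i j := by
  simp [Matrix.single, ite_and, Finset.sum_ite_eq, Matrix.of_apply]

lemma aux_sqrt_two_inv_mul : (Real.sqrt 2)⁻¹ * (Real.sqrt 2)⁻¹ * 2 = 1 := by
  rw [← mul_inv, Real.mul_self_sqrt (by norm_num)]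
  norm_num

lemma aux_frob_smul_add (c : ℝ) (X Y M : Matrix (Fin N) (Fin N) ℝ) :
    ∑ a, ∑ b, (c • (X + Y)) a b * M a b =
      c * ((∑ a, ∑ b, X a b * M a b) + ∑ a, ∑ b, Y a b * M a b) := by
  simp [Matrix.add_apply, Matrix.smul_apply, add_mul, mul_add, Finset.sum_add_distrib,
    Finset.mul_sum, smul_eq_mul, mul_assoc]

lemma aux_frobSij (i j k l : Fin N) (hij : i ≤ j) (hkl : k ≤ l) :
    ∑ a, ∑ b, SijMat i j a b * SijMat k l a b = if i = k ∧ j = l then 1 else 0 := by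
  have Skl : ∀ a b : Fin N, SijMat k l a b =
      if k = l then (if k = a ∧ k = b then (1:ℝ) else 0)
      else (Real.sqrt 2)⁻¹ *
        ((if k = a ∧ l = b then 1 else 0) + (if l = a ∧ k = b then 1 else 0)) := by
    intro a b
    by_cases h : k = l <;> simp [SijMat, h, Matrix.single]
  rcases hij.lt_or_eq with hij' | rfl <;> rcases hkl.lt_or_eq with hkl' | rfl
  · rw [show SijMat i j = (Real.sqrt 2)⁻¹ •
        (Matrix.single i j 1 + Matrix.single j i 1) from if_neg hij'.ne]
    rw [aux_frob_smul_add, aux_frob_std, aux_frob_std, Skl, Skl,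
      if_neg hkl'.ne, if_neg hkl'.ne]
    have h1 : ¬ (l = i ∧ k = j) := by rintro ⟨rfl, rfl⟩; exact absurd hij' (lt_asymm hkl')
    have h2 : ¬ (k = j ∧ l = i) := by rintro ⟨rfl, rfl⟩; exact absurd hij' (lt_asymm hkl')
    by_cases h : i = k ∧ j = l
    · obtain ⟨rfl, rfl⟩ := h
      simp only [h1, h2, if_false, and_self, if_true, if_pos rfl, add_zero, zero_add, mul_one]
      nlinarith [aux_sqrt_two_inv_mul]
    · have h3 : ¬ (k = i ∧ l = j) := fun hc => h ⟨hc.1.symm, hc.2.symm⟩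
      have h4 : ¬ (l = j ∧ k = i) := fun hc => h ⟨hc.2.symm, hc.1.symm⟩
      simp [h, h1, h2, h3, h4]
  · rw [show SijMat i j = (Real.sqrt 2)⁻¹ •
        (Matrix.single i j 1 + Matrix.single j i 1) from if_neg hij'.ne]
    rw [aux_frob_smul_add, aux_frob_std, aux_frob_std, Skl, Skl, if_pos rfl, if_pos rfl]
    have h1 : ¬ (k = i ∧ k = j) := by rintro ⟨rfl, rfl⟩; exact absurd hij' (lt_irrefl _)
    have h2 : ¬ (i = k ∧ j = k) := fun hc => h1 ⟨hc.1.symm, hc.2.symm⟩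
    have h3 : ¬ (k = j ∧ k = i) := fun hc => h1 ⟨hc.2, hc.1⟩
    simp [h1, h2, h3]
  · rw [show SijMat i i = Matrix.single i i 1 from if_pos rfl, aux_frob_std,
      Skl, if_neg hkl'.ne]
    have h1 : ¬ (k = i ∧ l = i) := by rintro ⟨rfl, rfl⟩; exact absurd hkl' (lt_irrefl _)
    have h2 : ¬ (l = i ∧ k = i) := fun hc => h1 ⟨hc.2, hc.1⟩
    have h3 : ¬ (i = k ∧ i = l) := fun hc => h1 ⟨hc.1.symm, hc.2.symm⟩
    simp [h1, h2, h3]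
  · rw [show SijMat i i = Matrix.single i i 1 from if_pos rfl, aux_frob_std,
      Skl, if_pos rfl]
    by_cases h : i = k <;> simp [h, eq_comm]

/-- `smulMat φ` as a linear map in the matrix argument. -/
def smulMatL (φ : Fin N → H₀) : Matrix (Fin N) (Fin N) ℝ →ₗ[ℝ] (Fin N → H₀) where
  toFun S := smulMat φ S
  map_add' A B := by funext j; simp [smulMat, add_smul, Finset.sum_add_distrib]
  map_smul' c A := by funext j; simp [smulMat, smul_smul, Finset.smul_sum]

lemma aux_inner_phi_smulMat {φ : Fin N → H₀} (hφ : outerProd φ φ = 1)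
    (A : Matrix (Fin N) (Fin N) ℝ) (i j : Fin N) :
    ⟪φ i, smulMat φ A j⟫ = A i j := by
  simp [smulMat, inner_sum, real_inner_smul_right, aux_inner_phi hφ, mul_ite,
    Finset.sum_ite_eq, Finset.mem_univ]

lemma aux_inner_smulMat_phi {φ : Fin N → H₀} (hφ : outerProd φ φ = 1)
    (A : Matrix (Fin N) (Fin N) ℝ) (i j : Fin N) :
    ⟪smulMat φ A i, φ j⟫ = A j i := by
  rw [real_inner_comm]; exact aux_inner_phi_smulMat hφ A j i

lemma aux_innerH_smulMat_left (φ : Fin N → H₀) (A : Matrix (Fin N) (Fin N) ℝ)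
    (η : Fin N → H₀) :
    innerH (smulMat φ A) η = ∑ i, ∑ j, A i j * ⟪φ i, η j⟫ := by
  unfold innerH smulMat
  simp only [sum_inner, real_inner_smul_left]
  rw [Finset.sum_comm]

/-- the normal space as a submodule -/
def normalSub (V : Submodule ℝ H₀) (φ : Fin N → H₀) : Submodule ℝ (Fin N → H₀) where
  carrier := {z : Fin N → H₀ | (∀ i, z i ∈ V) ∧
      ∀ η : Fin N → H₀, (∀ i, η i ∈ V) →
        outerProd η φ + outerProd φ η = 0 → innerH z η = 0}
  add_mem' := by
    rintro a b ⟨haV, ha⟩ ⟨hbV, hb⟩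
    refine ⟨fun i => V.add_mem (haV i) (hbV i), fun η hηV hη => ?_⟩
    have h1 := ha η hηV hη; have h2 := hb η hηV hη
    simp only [innerH, Pi.add_apply, inner_add_left, Finset.sum_add_distrib] at *
    linarith
  zero_mem' := by
    refine ⟨fun i => V.zero_mem, fun η hηV hη => ?_⟩
    simp [innerH]
  smul_mem' := by
    rintro c a ⟨haV, ha⟩
    refine ⟨fun i => V.smul_mem c (haV i), fun η hηV hη => ?_⟩
    have h1 := ha η hηV hη
    simp only [innerH, Pi.smul_apply, real_inner_smul_left, ← Finset.mul_sum] at *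
    rw [h1, mul_zero]

lemma aux_Sij_symm (i j a b : Fin N) : SijMat i j a b = SijMat i j b a := by
  by_cases h : i = j <;> simp [SijMat, h, Matrix.single, and_comm, add_comm]

lemma aux_pair_mem (φ : Fin N → H₀) (i j : Fin N) (hij : i ≤ j) :
    smulMat φ (Matrix.single i j 1 + Matrix.single j i 1) ∈
      Submodule.span ℝ
        {x : Fin N → H₀ | ∃ i j : Fin N, i ≤ j ∧ x = smulMat φ (SijMat i j)} := by
  rcases eq_or_lt_of_le hij with rfl | hlt
  · have h2 : Matrix.single i i (1:ℝ) + Matrix.single i i 1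
        = (2:ℝ) • SijMat i i := by
      simp [SijMat, two_smul]
    rw [show smulMat φ (Matrix.single i i 1 + Matrix.single i i 1)
        = smulMatL φ (Matrix.single i i 1 + Matrix.single i i 1) from rfl,
      h2, map_smul]
    exact Submodule.smul_mem _ _ (Submodule.subset_span ⟨i, i, le_refl i, rfl⟩)
  · have h2 : Matrix.single i j (1:ℝ) + Matrix.single j i 1
        = (Real.sqrt 2) • SijMat i j := by
      rw [SijMat, if_neg hlt.ne, smul_smul,
        mul_inv_cancel₀ (by positivity : Real.sqrt 2 ≠ 0), one_smul]
    rw [show smulMat φ (Matrix.single i j 1 + Matrix.single j i 1)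
        = smulMatL φ (Matrix.single i j 1 + Matrix.single j i 1) from rfl,
      h2, map_smul]
    exact Submodule.smul_mem _ _ (Submodule.subset_span ⟨i, j, le_of_lt hlt, rfl⟩)

lemma aux_pair_mem' (φ : Fin N → H₀) (i j : Fin N) :
    smulMat φ (Matrix.single i j 1 + Matrix.single j i 1) ∈
      Submodule.span ℝ
        {x : Fin N → H₀ | ∃ i j : Fin N, i ≤ j ∧ x = smulMat φ (SijMat i j)} := by
  rcases le_total i j with h | h
  · exact aux_pair_mem φ i j h
  · rw [add_comm]; exact aux_pair_mem φ j i h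

lemma aux_symm_eq_sum {B : Matrix (Fin N) (Fin N) ℝ} (hB : ∀ i j, B i j = B j i) :
    B = ∑ i, ∑ j, (B i j / 2) •
      (Matrix.single i j (1:ℝ) + Matrix.single j i 1) := by
  ext a b
  simp only [Matrix.sum_apply, Matrix.smul_apply, Matrix.add_apply,
    Matrix.single, Matrix.of_apply, smul_eq_mul, mul_add, ite_and,
    mul_ite, mul_one, mul_zero]
  rw [Finset.sum_comm]
  simp [Finset.sum_ite_eq, Finset.sum_add_distrib]
  rw [hB b a]
  ring

lemma aux_symm_smulMat_mem (φ : Fin N → H₀) {B : Matrix (Fin N) (Fin N) ℝ}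
    (hB : ∀ i j, B i j = B j i) :
    smulMat φ B ∈ Submodule.span ℝ
        {x : Fin N → H₀ | ∃ i j : Fin N, i ≤ j ∧ x = smulMat φ (SijMat i j)} := by
  have h1 : smulMat φ B = smulMatL φ B := rfl
  rw [h1, aux_symm_eq_sum hB, map_sum]
  refine Submodule.sum_mem _ fun i _ => ?_
  rw [map_sum]
  refine Submodule.sum_mem _ fun j _ => ?_
  rw [map_smul]
  exact Submodule.smul_mem _ _ (aux_pair_mem' φ i j)

end Aux

/-- the family `φ^{ij} = φ S^{ij}` (for `i ≤ j`) is `H`-orthonormal and its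
span equals the `H`-orthogonal complement of the tangent space `T_φ` within `Ṽ^N`. -/
theorem phiSij_orthonormal_basis_of_normal_space {N : ℕ} (hN : 1 ≤ N) {H₀ : Type*}
    [NormedAddCommGroup H₀] [InnerProductSpace ℝ H₀]
    (V : Submodule ℝ H₀)
    (φ : Fin N → H₀) (hφmem : ∀ i, φ i ∈ V) (hφ : outerProd φ φ = 1) :
    (∀ i j k l : Fin N, i ≤ j → k ≤ l →
      innerH (smulMat φ (SijMat i j)) (smulMat φ (SijMat k l)) =
        if i = k ∧ j = l then 1 else 0) ∧
    ((Submodule.span ℝ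
        {x : Fin N → H₀ | ∃ i j : Fin N, i ≤ j ∧ x = smulMat φ (SijMat i j)} :
        Set (Fin N → H₀)) =
      {z : Fin N → H₀ | (∀ i, z i ∈ V) ∧
        ∀ η : Fin N → H₀, (∀ i, η i ∈ V) →
          outerProd η φ + outerProd φ η = 0 → innerH z η = 0}) := by
  constructor
  · intro i j k l hij hkl
    rw [aux_innerH_smulMat_smulMat hφ, aux_frobSij i j k l hij hkl]
  · have gensub : {x : Fin N → H₀ | ∃ i j : Fin N, i ≤ j ∧ x = smulMat φ (SijMat i j)}
        ⊆ ↑(normalSub V φ) := by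
      rintro x ⟨i, j, hij, rfl⟩
      refine ⟨fun k => Submodule.sum_mem _ fun a _ => V.smul_mem _ (hφmem a),
        fun η hηV hη => ?_⟩
      have hM : ∀ a b : Fin N, ⟪φ a, η b⟫ = - ⟪φ b, η a⟫ := by
        intro a b
        have h1 := congrFun (congrFun hη b) a
        have h2 : ⟪η b, φ a⟫ = ⟪φ a, η b⟫ := real_inner_comm _ _
        simp only [outerProd, Matrix.add_apply, Matrix.of_apply, Matrix.zero_apply] at h1
        linarith
      rw [aux_innerH_smulMat_left]
      have key : (∑ a, ∑ b, SijMat i j a b * ⟪φ a, η b⟫)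
          = - ∑ a, ∑ b, SijMat i j a b * ⟪φ a, η b⟫ := by
        calc (∑ a, ∑ b, SijMat i j a b * ⟪φ a, η b⟫)
            = ∑ a, ∑ b, -(SijMat i j b a * ⟪φ b, η a⟫) := by
              refine Finset.sum_congr rfl fun a _ => Finset.sum_congr rfl fun b _ => ?_
              rw [aux_Sij_symm, hM]; ring
          _ = - ∑ a, ∑ b, SijMat i j b a * ⟪φ b, η a⟫ := by
              simp [Finset.sum_neg_distrib]
          _ = - ∑ a, ∑ b, SijMat i j a b * ⟪φ a, η b⟫ := by
              rw [Finset.sum_comm]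
      linarith
    ext x
    constructor
    · intro hx
      exact Submodule.span_le.mpr gensub hx
    · rintro ⟨hzV, hz2⟩
      set B : Matrix (Fin N) (Fin N) ℝ := outerProd φ x with hBdef
      have hB : ∀ a b, B a b = ⟪φ a, x b⟫ := fun a b => rfl
      set w : Fin N → H₀ := fun j => x j - smulMat φ B j with hwdef
      have hworth : ∀ k j, ⟪φ k, w j⟫ = 0 := by
        intro k j
        simp only [hwdef, inner_sub_right, aux_inner_phi_smulMat hφ]
        rw [← hB k j, sub_self]
      have hwV : ∀ j, w j ∈ V := fun j => V.sub_mem (hzV j)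
        (Submodule.sum_mem _ fun a _ => V.smul_mem _ (hφmem a))
      set Ba : Matrix (Fin N) (Fin N) ℝ := Matrix.of fun a b => (B a b - B b a)/2 with hBadef
      have hBaanti : ∀ a b, Ba a b = - Ba b a := by
        intro a b; show (B a b - B b a)/2 = -((B b a - B a b)/2); ring
      set η : Fin N → H₀ := fun j => w j + smulMat φ Ba j with hηdef
      have hηV : ∀ j, η j ∈ V := fun j => V.add_mem (hwV j)
        (Submodule.sum_mem _ fun a _ => V.smul_mem _ (hφmem a))
      have hηtan : outerProd η φ + outerProd φ η = 0 := by
        ext a b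
        simp only [outerProd, Matrix.add_apply, Matrix.of_apply, Matrix.zero_apply, hηdef]
        rw [inner_add_left, inner_add_right]
        have h1 : ⟪w a, φ b⟫ = 0 := by rw [real_inner_comm]; exact hworth b a
        rw [h1, aux_inner_smulMat_phi hφ, hworth, aux_inner_phi_smulMat hφ]
        have h2 := hBaanti a b
        linarith
      have h0 := hz2 η hηV hηtan
      -- expand innerH x η
      have hx_eq : ∀ j, x j = w j + smulMat φ B j := by
        intro j; simp [hwdef]
      have hT2 : ∀ j, ⟪w j, smulMat φ Ba j⟫ = 0 := by
        intro j
        simp only [smulMat, inner_sum, real_inner_smul_right]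
        refine Finset.sum_eq_zero fun i _ => ?_
        rw [real_inner_comm, hworth, mul_zero]
      have hT3 : ∀ j, ⟪smulMat φ B j, w j⟫ = 0 := by
        intro j
        simp only [smulMat, sum_inner, real_inner_smul_left]
        refine Finset.sum_eq_zero fun i _ => ?_
        rw [hworth, mul_zero]
      have hT4 : innerH (smulMat φ B) (smulMat φ Ba) = ∑ i, ∑ j, B i j * Ba i j :=
        aux_innerH_smulMat_smulMat hφ B Ba
      have hswap : (∑ i, ∑ j, B j i * Ba i j) = - ∑ i, ∑ j, B i j * Ba i j := by
        calc (∑ i, ∑ j, B j i * Ba i j)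
            = ∑ i, ∑ j, -(B j i * Ba j i) := by
              refine Finset.sum_congr rfl fun i _ => Finset.sum_congr rfl fun j _ => ?_
              rw [hBaanti i j]; ring
          _ = - ∑ i, ∑ j, B j i * Ba j i := by simp [Finset.sum_neg_distrib]
          _ = - ∑ i, ∑ j, B i j * Ba i j := by rw [Finset.sum_comm]
      have hBa_sq : (∑ i, ∑ j, Ba i j ^ 2) = ∑ i, ∑ j, B i j * Ba i j := by
        have hexp : ∀ i j : Fin N, Ba i j ^ 2 = (B i j * Ba i j - B j i * Ba i j)/2 := by
          intro i j
          show ((B i j - B j i)/2) ^ 2 = (B i j * ((B i j - B j i)/2)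
            - B j i * ((B i j - B j i)/2))/2
          ring
        have : (∑ i, ∑ j, Ba i j ^ 2)
            = ((∑ i, ∑ j, B i j * Ba i j) - ∑ i, ∑ j, B j i * Ba i j)/2 := by
          rw [← Finset.sum_sub_distrib, Finset.sum_div]
          refine Finset.sum_congr rfl fun i _ => ?_
          rw [← Finset.sum_sub_distrib, Finset.sum_div]
          exact Finset.sum_congr rfl fun j _ => hexp i j
        rw [this, hswap]; ring
      have hmain : (∑ j, ⟪w j, w j⟫) + (∑ i, ∑ j, Ba i j ^ 2) = 0 := by
        have : innerH x η = (∑ j, ⟪w j, w j⟫) + ∑ i, ∑ j, B i j * Ba i j := by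
          unfold innerH
          calc (∑ j, ⟪x j, η j⟫)
              = ∑ j, (⟪w j, w j⟫ + ⟪w j, smulMat φ Ba j⟫
                + (⟪smulMat φ B j, w j⟫ + ⟪smulMat φ B j, smulMat φ Ba j⟫)) := by
                refine Finset.sum_congr rfl fun j _ => ?_
                rw [hx_eq j, hηdef]
                simp only [inner_add_left, inner_add_right]
                ring
            _ = (∑ j, ⟪w j, w j⟫) + ∑ i, ∑ j, B i j * Ba i j := by
                rw [← hT4]
                unfold innerH
                simp only [hT2, hT3, add_zero, zero_add, Finset.sum_add_distrib]
        rw [← hBa_sq] at this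
        rw [h0] at this
        linarith
      have hw_nonneg : (0:ℝ) ≤ ∑ j, ⟪w j, w j⟫ :=
        Finset.sum_nonneg fun j _ => real_inner_self_nonneg
      have hBa_nonneg : (0:ℝ) ≤ ∑ i, ∑ j, Ba i j ^ 2 :=
        Finset.sum_nonneg fun i _ => Finset.sum_nonneg fun j _ => sq_nonneg _
      have hw_zero : (∑ j, ⟪w j, w j⟫) = 0 := le_antisymm (by linarith) hw_nonneg
      have hBa_zero : (∑ i, ∑ j, Ba i j ^ 2) = 0 := le_antisymm (by linarith) hBa_nonneg
      have hw0 : ∀ j, w j = 0 := by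
        intro j
        have := (Finset.sum_eq_zero_iff_of_nonneg
          (fun j _ => real_inner_self_nonneg)).1 hw_zero j (Finset.mem_univ j)
        exact inner_self_eq_zero.1 this
      have hBa0 : ∀ i j, Ba i j = 0 := by
        intro i j
        have h1 := (Finset.sum_eq_zero_iff_of_nonneg
          (fun i _ => Finset.sum_nonneg fun j _ => sq_nonneg (Ba i j))).1 hBa_zero i
          (Finset.mem_univ i)
        have h2 := (Finset.sum_eq_zero_iff_of_nonneg
          (fun j _ => sq_nonneg (Ba i j))).1 h1 j (Finset.mem_univ j)
        exact pow_eq_zero_iff (n := 2) (by norm_num) |>.1 h2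
      have hBsymm : ∀ a b, B a b = B b a := by
        intro a b
        have := hBa0 a b
        have h2 : (B a b - B b a)/2 = 0 := this
        linarith
      have hx_smul : x = smulMat φ B := by
        funext j
        rw [hx_eq j, hw0 j, zero_add]
      show x ∈ Submodule.span ℝ _
      rw [hx_smul]
      exact aux_symm_smulMat_mem φ hBsymm
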